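/- Let A, B, C be positive definite n×n complex matrices with B ≤ C in the Loewner order, where S(A|X) = A^(1/2) · log(A^(-1/2) X A^(-1/2)) · A^(1/2). Then S(A|B) ≤ S(A|C). -/

import Mathlib

open Matrix
open scoped ComplexOrder

attribute [local instance] Matrix.frobeniusNormedAddCommGroup Matrix.frobeniusNormedSpace

/-- Matrix logarithm via the continuous functional calculus (spectral theorem). -/
noncomputable def mlog {n : Type*} [Fintype n] [DecidableEq n] (A : Matrix n n ℂ) :
    Matrix n n ℂ := cfc Real.log A

/-- Real power of a matrix via the continuous functional calculus (spectral theorem). -/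
noncomputable def mpow {n : Type*} [Fintype n] [DecidableEq n] (A : Matrix n n ℂ) (r : ℝ) :
    Matrix n n ℂ := cfc (fun x : ℝ => x ^ r) A

section Aux

variable {n : Type*} [Fintype n] [DecidableEq n]

lemma contOn (M : Matrix n n ℂ) (f : ℝ → ℝ) : ContinuousOn f (spectrum ℝ M) := by
  rw [continuousOn_iff_continuous_restrict]
  have : Finite (spectrum ℝ M) := M.finite_real_spectrum
  exact continuous_of_discreteTopology

lemma quadform_cfc {M : Matrix n n ℂ} (hM : M.IsHermitian) (f : ℝ → ℝ) (v : n → ℂ) :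
    star v ⬝ᵥ (cfc f M) *ᵥ v =
      ((∑ i, f (hM.eigenvalues i) *
        Complex.normSq ((star (hM.eigenvectorUnitary : Matrix n n ℂ) *ᵥ v) i) : ℝ) : ℂ) := by
  rw [hM.cfc_eq, Matrix.IsHermitian.cfc, Unitary.conjStarAlgAut_apply]
  set U : Matrix n n ℂ := (hM.eigenvectorUnitary : Matrix n n ℂ)
  set w : n → ℂ := star U *ᵥ v with hw
  have h1 : (U * diagonal (RCLike.ofReal ∘ f ∘ hM.eigenvalues) * star U) *ᵥ v
      = U *ᵥ (diagonal (RCLike.ofReal ∘ f ∘ hM.eigenvalues) *ᵥ w) := by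
    simp [hw, ← Matrix.mulVec_mulVec, Matrix.mul_assoc]
  rw [h1, Matrix.dotProduct_mulVec]
  have h2 : star v ᵥ* U = star w := by
    rw [hw, Matrix.star_mulVec, Matrix.star_eq_conjTranspose, Matrix.conjTranspose_conjTranspose]
  rw [h2]
  simp only [dotProduct, Matrix.mulVec_diagonal, Function.comp_apply, Pi.star_apply]
  push_cast
  refine Finset.sum_congr rfl fun i _ => ?_
  rw [Complex.normSq_eq_conj_mul_self, mul_left_comm]
  rfl

-- weights sum: star w ⬝ᵥ w = star v ⬝ᵥ v for w = star U *ᵥ v, U unitary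
lemma weight_sum {M : Matrix n n ℂ} (hM : M.IsHermitian) (v : n → ℂ) :
    ((∑ i, Complex.normSq ((star (hM.eigenvectorUnitary : Matrix n n ℂ) *ᵥ v) i) : ℝ) : ℂ)
      = star v ⬝ᵥ v := by
  have h := quadform_cfc hM (fun _ => (1:ℝ)) v
  rw [cfc_const_one ℝ M] at h
  simpa using h.symm

-- PSD criterion
lemma cfc_posSemidef {M : Matrix n n ℂ} (hM : M.IsHermitian) {f : ℝ → ℝ}
    (hf : ∀ i, 0 ≤ f (hM.eigenvalues i)) : (cfc f M).PosSemidef := by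
  rw [hM.cfc_eq, Matrix.IsHermitian.cfc, Unitary.conjStarAlgAut_apply]
  rw [Matrix.star_eq_conjTranspose]
  refine Matrix.PosSemidef.mul_mul_conjTranspose_same ?_ _
  refine Matrix.PosSemidef.diagonal fun i => ?_
  simpa using Complex.zero_le_real.2 (hf i)

-- PD congruence
lemma posDef_conj {M : Matrix n n ℂ} (hM : M.PosDef) (E : Matrix n n ℂ)
    (hE : IsUnit E.det) : (E * M * Eᴴ).PosDef := by
  refine Matrix.PosDef.of_dotProduct_mulVec_pos ?_ fun v hv => ?_
  · have := hM.1.eq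
    simp only [Matrix.IsHermitian, Matrix.conjTranspose_mul, Matrix.conjTranspose_conjTranspose,
      this, Matrix.mul_assoc]
  · have h1 : (E * M * Eᴴ) *ᵥ v = E *ᵥ (M *ᵥ (Eᴴ *ᵥ v)) := by
      simp [← Matrix.mulVec_mulVec, Matrix.mul_assoc]
    rw [h1, Matrix.dotProduct_mulVec]
    have h2 : star v ᵥ* E = star (Eᴴ *ᵥ v) := by
      rw [Matrix.star_mulVec, Matrix.conjTranspose_conjTranspose]
    rw [h2]
    refine hM.dotProduct_mulVec_pos fun h0 => hv ?_
    have hEH : IsUnit (Eᴴ).det := by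
      rw [Matrix.det_conjTranspose]; exact hE.star
    exact Matrix.mulVec_injective_iff_isUnit.2 ((Matrix.isUnit_iff_isUnit_det _).mpr hEH) (by simpa using h0 : Eᴴ *ᵥ v = Eᴴ *ᵥ 0)

-- PD criterion for cfc
lemma cfc_posDef {M : Matrix n n ℂ} (hM : M.PosDef) {f : ℝ → ℝ}
    (hf : ∀ i, 0 < f (hM.1.eigenvalues i)) : (cfc f M).PosDef := by
  rw [hM.1.cfc_eq, Matrix.IsHermitian.cfc, Unitary.conjStarAlgAut_apply,
    Matrix.star_eq_conjTranspose]
  refine posDef_conj ?_ _ ?_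
  · rw [Matrix.posDef_diagonal_iff]
    intro i
    simpa using Complex.zero_lt_real.2 (hf i)
  · have h := (hM.1.eigenvectorUnitary).2
    rw [Unitary.mem_iff] at h
    exact Matrix.isUnit_det_of_right_inverse h.2
-- spectrum of PD matrix is positive
lemma pd_spectrum_pos {M : Matrix n n ℂ} (hM : M.PosDef) :
    ∀ x ∈ spectrum ℝ M, 0 < x := by
  intro x hx
  rw [hM.1.spectrum_real_eq_range_eigenvalues] at hx
  obtain ⟨i, rfl⟩ := hx
  exact hM.eigenvalues_pos i

-- cfc inverse identity
lemma cfc_add_inv {M : Matrix n n ℂ} (hM : M.PosDef) (c : ℝ) (hc : 0 ≤ c) :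
    cfc (fun x : ℝ => (x + c)⁻¹) M = (M + (c : ℂ) • 1)⁻¹ := by
  have hsa : IsSelfAdjoint M := hM.1
  have hN : M + (c : ℂ) • 1 = cfc (fun x : ℝ => x + c) M := by
    rw [cfc_add _ _ _ (contOn M _) (contOn M _), cfc_id' ℝ M, cfc_const c M]
    congr 1
    rw [Algebra.algebraMap_eq_smul_one]
    norm_cast
  have hmul : cfc (fun x : ℝ => (x + c)⁻¹) M * (M + (c : ℂ) • 1) = 1 := by
    rw [hN, ← cfc_mul _ _ M (contOn M _) (contOn M _)]
    have : cfc (fun x : ℝ => (x + c)⁻¹ * (x + c)) M = cfc (fun _ : ℝ => (1:ℝ)) M := by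
      apply cfc_congr
      intro x hx
      have hxpos := pd_spectrum_pos hM x hx
      field_simp
    rw [this, cfc_const_one ℝ M]
  exact (Matrix.inv_eq_left_inv hmul).symm

-- eigenvalues bounded by 1
lemma eig_le_one {Z : Matrix n n ℂ} (hZ : Z.IsHermitian) (h : (1 - Z).PosSemidef) (i : n) :
    hZ.eigenvalues i ≤ 1 := by
  set u : n → ℂ := ⇑(hZ.eigenvectorBasis i) with hu
  have hmv : Z *ᵥ u = (hZ.eigenvalues i : ℂ) • u := hZ.mulVec_eigenvectorBasis i
  have h2 := h.dotProduct_mulVec_nonneg u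
  rw [Matrix.sub_mulVec, Matrix.one_mulVec, hmv, dotProduct_sub,
    dotProduct_smul] at h2
  have hne : u ≠ 0 := by
    intro h0
    have := (hZ.eigenvectorBasis.orthonormal).ne_zero i
    apply this
    ext j
    exact congrFun h0 j
  set t : ℝ := ∑ j, Complex.normSq (u j) with ht
  have htpos : 0 < t := by
    obtain ⟨j, hj⟩ := Function.ne_iff.mp hne
    refine Finset.sum_pos' (fun k _ => Complex.normSq_nonneg _) ⟨j, Finset.mem_univ j, ?_⟩
    simpa [Complex.normSq_pos] using hj
  have hdot : star u ⬝ᵥ u = (t : ℂ) := by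
    rw [ht]
    push_cast
    refine Finset.sum_congr rfl fun j _ => ?_
    rw [Complex.normSq_eq_conj_mul_self]
    rfl
  rw [hdot] at h2
  have : (0:ℂ) ≤ ((1 - hZ.eigenvalues i) * t : ℝ) := by
    convert h2 using 1
    rw [smul_eq_mul]
    push_cast
    ring
  rw [Complex.zero_le_real] at this
  nlinarith
-- inverse is antitone
lemma inv_antitone {X Y : Matrix n n ℂ} (hX : X.PosDef) (hY : Y.PosDef)
    (h : (Y - X).PosSemidef) : (X⁻¹ - Y⁻¹).PosSemidef := by
  have hYsa : IsSelfAdjoint Y := hY.1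
  set S : Matrix n n ℂ := cfc Real.sqrt Y with hS
  have hSps : S.PosSemidef := cfc_posSemidef hY.1 fun i => Real.sqrt_nonneg _
  have hSH : S.IsHermitian := hSps.1
  have hSS : S * S = Y := by
    rw [hS, ← cfc_mul _ _ Y (contOn Y _) (contOn Y _)]
    conv_rhs => rw [← cfc_id' ℝ Y]
    refine cfc_congr fun x hx => ?_
    exact Real.mul_self_sqrt (pd_spectrum_pos hY x hx).le
  have hdet : IsUnit S.det := by
    rw [isUnit_iff_ne_zero]
    intro h0
    have : Y.det = 0 := by rw [← hSS, Matrix.det_mul, h0, mul_zero]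
    exact (hY.det_pos.ne') this
  have hSinv : S⁻¹ * S = 1 := Matrix.nonsing_inv_mul S hdet
  have hSinv' : S * S⁻¹ = 1 := Matrix.mul_nonsing_inv S hdet
  have hSinvH : (S⁻¹).IsHermitian := by
    rw [Matrix.IsHermitian, Matrix.conjTranspose_nonsing_inv, hSH.eq]
  have hdetinv : IsUnit (S⁻¹).det := Matrix.isUnit_nonsing_inv_det S hdet
  set Z : Matrix n n ℂ := S⁻¹ * X * S⁻¹ with hZdef
  have hZ : Z.PosDef := by
    have := posDef_conj hX S⁻¹ hdetinv
    rwa [hSinvH.eq] at this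
  have h1Z : (1 - Z).PosSemidef := by
    have key : 1 - Z = S⁻¹ * (Y - X) * (S⁻¹)ᴴ := by
      rw [hSinvH.eq, Matrix.mul_sub, Matrix.sub_mul, hZdef]
      congr 1
      rw [← hSS]
      symm
      calc S⁻¹ * (S * S) * S⁻¹ = (S⁻¹ * S) * (S * S⁻¹) := by
              simp only [← mul_assoc]
        _ = 1 := by rw [hSinv, hSinv', one_mul]
    rw [key]
    exact h.mul_mul_conjTranspose_same _
  have hZinv : (Z⁻¹ - 1).PosSemidef := by
    have hZsa : IsSelfAdjoint Z := hZ.1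
    have hZi : Z⁻¹ = cfc (fun x : ℝ => (x + 0)⁻¹) Z := by
      rw [cfc_add_inv hZ 0 le_rfl, Complex.ofReal_zero, zero_smul, add_zero]
    have hsub : Z⁻¹ - 1 = cfc (fun x : ℝ => (x + 0)⁻¹ - 1) Z := by
      rw [cfc_sub _ _ Z (contOn Z _) (contOn Z _), ← hZi, cfc_const_one ℝ Z]
    rw [hsub]
    refine cfc_posSemidef hZ.1 fun i => ?_
    have h1 : 0 < hZ.1.eigenvalues i := hZ.eigenvalues_pos i
    have h2 : hZ.1.eigenvalues i ≤ 1 := eig_le_one hZ.1 h1Z i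
    simp only [add_zero, sub_nonneg]
    nlinarith [mul_inv_cancel₀ (ne_of_gt h1), inv_pos.mpr h1]
  have keyX : S⁻¹ * Z⁻¹ * S⁻¹ = X⁻¹ := by
    have hZi : Z⁻¹ = S * (X⁻¹ * S) := by
      rw [hZdef, Matrix.mul_inv_rev, Matrix.mul_inv_rev,
        Matrix.nonsing_inv_nonsing_inv S hdet]
    rw [hZi]
    calc S⁻¹ * (S * (X⁻¹ * S)) * S⁻¹ = (S⁻¹ * S) * X⁻¹ * (S * S⁻¹) := by
            simp only [← mul_assoc]
      _ = X⁻¹ := by rw [hSinv, hSinv', one_mul, mul_one]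
  have keyY : S⁻¹ * 1 * S⁻¹ = Y⁻¹ := by
    rw [mul_one, ← hSS, Matrix.mul_inv_rev]
  have final : X⁻¹ - Y⁻¹ = S⁻¹ * (Z⁻¹ - 1) * (S⁻¹)ᴴ := by
    rw [hSinvH.eq, Matrix.mul_sub, Matrix.sub_mul, keyX, keyY]
  rw [final]
  exact hZinv.mul_mul_conjTranspose_same _
-- shifted matrix PD
lemma shift_posDef {X : Matrix n n ℂ} (hX : X.PosDef) (c : ℝ) (hc : 0 ≤ c) :
    (X + (c : ℂ) • 1).PosDef := by
  refine Matrix.PosDef.of_dotProduct_mulVec_pos ?_ fun v hv => ?_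
  · have h1 : ((c:ℂ) • (1 : Matrix n n ℂ)).IsHermitian := by
      rw [Matrix.IsHermitian, Matrix.conjTranspose_smul, Matrix.conjTranspose_one]
      congr 1
      simp [Complex.ext_iff]
    exact hX.1.add h1
  · rw [Matrix.add_mulVec, dotProduct_add, Matrix.smul_mulVec,
      Matrix.one_mulVec, dotProduct_smul]
    have h1 := hX.dotProduct_mulVec_pos hv
    have h2 : 0 ≤ (c : ℂ) * (star v ⬝ᵥ v) := by
      refine mul_nonneg (Complex.zero_le_real.2 hc) ?_
      exact dotProduct_star_self_nonneg v
    calc (0:ℂ) < star v ⬝ᵥ X *ᵥ v := h1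
      _ ≤ star v ⬝ᵥ X *ᵥ v + (c:ℂ) * (star v ⬝ᵥ v) := le_add_of_nonneg_right h2
      _ = star v ⬝ᵥ X *ᵥ v + (c:ℂ) • (star v ⬝ᵥ v) := by rw [smul_eq_mul]

-- resolvent antitone
lemma resolvent_antitone {X Y : Matrix n n ℂ} (hX : X.PosDef) (hY : Y.PosDef)
    (h : (Y - X).PosSemidef) (c : ℝ) (hc : 0 ≤ c) :
    (cfc (fun s : ℝ => (s + c)⁻¹) X - cfc (fun s : ℝ => (s + c)⁻¹) Y).PosSemidef := by
  rw [cfc_add_inv hX c hc, cfc_add_inv hY c hc]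
  refine inv_antitone (shift_posDef hX c hc) (shift_posDef hY c hc) ?_
  rwa [add_sub_add_right_eq_sub]

-- scalar integral:  ∫ x in 0..1, (a-1)/(1+x*(a-1)) = log a
lemma denom_pos {a : ℝ} (ha : 0 < a) {x : ℝ} (hx : x ∈ Set.Icc (0:ℝ) 1) :
    0 < 1 + x * (a - 1) := by
  rcases le_or_gt 1 a with h | h
  · nlinarith [hx.1]
  · nlinarith [hx.1, hx.2]

lemma scalar_cont {a : ℝ} (ha : 0 < a) :
    ContinuousOn (fun x : ℝ => (a - 1) / (1 + x * (a - 1))) (Set.Icc 0 1) := by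
  refine ContinuousOn.div continuousOn_const (by fun_prop) fun x hx => ?_
  exact (denom_pos ha hx).ne'

lemma scalar_integral {a : ℝ} (ha : 0 < a) :
    ∫ x in (0:ℝ)..1, (a - 1) / (1 + x * (a - 1)) = Real.log a := by
  have key : ∀ x ∈ Set.uIcc (0:ℝ) 1,
      HasDerivAt (fun y : ℝ => Real.log (1 + y * (a - 1)))
        ((a - 1) / (1 + x * (a - 1))) x := by
    intro x hx
    rw [Set.uIcc_of_le (by norm_num : (0:ℝ) ≤ 1)] at hx
    have hd : 0 < 1 + x * (a - 1) := denom_pos ha hx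
    have h1 : HasDerivAt (fun y : ℝ => 1 + y * (a - 1)) (a - 1) x := by
      simpa using ((hasDerivAt_id x).mul_const (a - 1)).const_add 1
    have := (Real.hasDerivAt_log hd.ne').comp x h1
    simpa [div_eq_inv_mul, Function.comp_def] using this
  have hint : IntervalIntegrable (fun x : ℝ => (a - 1) / (1 + x * (a - 1)))
      MeasureTheory.volume 0 1 := by
    apply ContinuousOn.intervalIntegrable
    rw [Set.uIcc_of_le (by norm_num : (0:ℝ) ≤ 1)]
    exact scalar_cont ha
  rw [intervalIntegral.integral_eq_sub_of_hasDerivAt key hint]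
  norm_num

lemma hx_decomp {x : ℝ} (hx0 : 0 < x) (hx1 : x ≤ 1) {a : ℝ} (ha : 0 < a) :
    (a - 1) / (1 + x * (a - 1)) = 1/x - (((1-x)/x + 1)/x) * (a + (1-x)/x)⁻¹ := by
  have hden : 0 < 1 + x * (a - 1) := denom_pos ha ⟨le_of_lt hx0, hx1⟩
  have hac : 0 < a + (1-x)/x := by
    have : 0 ≤ (1-x)/x := div_nonneg (by linarith) (le_of_lt hx0)
    linarith
  have hd2 : a + (1-x)/x = (1 + x*(a-1))/x := by
    field_simp
    ring
  rw [hd2, inv_div]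
  have h3 : (1-x)/x + 1 = 1/x := by field_simp; ring
  rw [h3]
  have hD : 1 + a * x - x ≠ 0 := by nlinarith
  field_simp
  linear_combination mul_inv_cancel₀ hD

lemma sum_log_mono (e1 e2 w1 w2 : n → ℝ) (he1 : ∀ i, 0 < e1 i) (he2 : ∀ i, 0 < e2 i)
    (hsum : ∑ i, w1 i = ∑ i, w2 i)
    (hres : ∀ c : ℝ, 0 ≤ c → ∑ i, (e2 i + c)⁻¹ * w2 i ≤ ∑ i, (e1 i + c)⁻¹ * w1 i)
    (hlin : ∑ i, (e1 i - 1) * w1 i ≤ ∑ i, (e2 i - 1) * w2 i) :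
    ∑ i, Real.log (e1 i) * w1 i ≤ ∑ i, Real.log (e2 i) * w2 i := by
  have hint : ∀ (e w : n → ℝ), (∀ i, 0 < e i) → ∀ i : n, IntervalIntegrable
      (fun x : ℝ => (e i - 1) / (1 + x * (e i - 1)) * w i) MeasureTheory.volume 0 1 := by
    intro e w he i
    apply ContinuousOn.intervalIntegrable
    rw [Set.uIcc_of_le (by norm_num : (0:ℝ) ≤ 1)]
    exact (scalar_cont (he i)).mul continuousOn_const
  have hval : ∀ (e w : n → ℝ), (∀ i, 0 < e i) →
      ∫ x in (0:ℝ)..1, ∑ i, (e i - 1) / (1 + x * (e i - 1)) * w i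
        = ∑ i, Real.log (e i) * w i := by
    intro e w he
    rw [intervalIntegral.integral_finset_sum (f := fun i x => (e i - 1) / (1 + x * (e i - 1)) * w i) (fun i _ => hint e w he i)]
    refine Finset.sum_congr rfl fun i _ => ?_
    rw [intervalIntegral.integral_mul_const, scalar_integral (he i)]
  have hintsum : ∀ (e w : n → ℝ), (∀ i, 0 < e i) → IntervalIntegrable
      (fun x : ℝ => ∑ i, (e i - 1) / (1 + x * (e i - 1)) * w i) MeasureTheory.volume 0 1 := by
    intro e w he
    have := IntervalIntegrable.sum Finset.univ (fun i _ => hint e w he i)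
    rwa [Finset.sum_fn] at this
  have hmono : ∀ x ∈ Set.Icc (0:ℝ) 1,
      ∑ i, (e1 i - 1) / (1 + x * (e1 i - 1)) * w1 i
        ≤ ∑ i, (e2 i - 1) / (1 + x * (e2 i - 1)) * w2 i := by
    intro x hx
    rcases eq_or_lt_of_le hx.1 with hx0 | hx0
    · simp only [← hx0, zero_mul, add_zero, div_one]
      exact hlin
    · have hx1 := hx.2
      have hrw : ∀ (e w : n → ℝ), (∀ i, 0 < e i) →
          ∑ i, (e i - 1) / (1 + x * (e i - 1)) * w i
            = (1/x) * ∑ i, w i - (((1-x)/x + 1)/x) * ∑ i, (e i + (1-x)/x)⁻¹ * w i := by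
        intro e w he
        rw [Finset.mul_sum, Finset.mul_sum, ← Finset.sum_sub_distrib]
        refine Finset.sum_congr rfl fun i _ => ?_
        rw [hx_decomp hx0 hx1 (he i)]
        ring
      rw [hrw e1 w1 he1, hrw e2 w2 he2, hsum]
      have hc : (0:ℝ) ≤ (1-x)/x := div_nonneg (by linarith) (le_of_lt hx0)
      have hcoef : (0:ℝ) ≤ ((1-x)/x + 1)/x := by positivity
      have := hres ((1-x)/x) hc
      nlinarith
  rw [← hval e1 w1 he1, ← hval e2 w2 he2]
  exact intervalIntegral.integral_mono_on (by norm_num) (hintsum e1 w1 he1)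
    (hintsum e2 w2 he2) hmono

lemma qf_mono {X Y : Matrix n n ℂ} (hX : X.IsHermitian) (hY : Y.IsHermitian) (f : ℝ → ℝ)
    (hPSD : (cfc f Y - cfc f X).PosSemidef) (v : n → ℂ) :
    ∑ i, f (hX.eigenvalues i) *
        Complex.normSq ((star (hX.eigenvectorUnitary : Matrix n n ℂ) *ᵥ v) i)
      ≤ ∑ i, f (hY.eigenvalues i) *
        Complex.normSq ((star (hY.eigenvectorUnitary : Matrix n n ℂ) *ᵥ v) i) := by
  have h2 := hPSD.dotProduct_mulVec_nonneg v
  rw [Matrix.sub_mulVec, dotProduct_sub, quadform_cfc hX f v, quadform_cfc hY f v,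
    ← Complex.ofReal_sub, Complex.zero_le_real, sub_nonneg] at h2
  exact h2

lemma cfc_sub_one {M : Matrix n n ℂ} (hM : M.IsHermitian) :
    cfc (fun s : ℝ => s - 1) M = M - 1 := by
  have hsa : IsSelfAdjoint M := hM
  rw [cfc_sub _ _ M (contOn M _) (contOn M _), cfc_id' ℝ M, cfc_const_one ℝ M]

lemma log_monotone {X Y : Matrix n n ℂ} (hX : X.PosDef) (hY : Y.PosDef)
    (h : (Y - X).PosSemidef) : (cfc Real.log Y - cfc Real.log X).PosSemidef := by
  refine Matrix.PosSemidef.of_dotProduct_mulVec_nonneg ?_ ?_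
  · have h1 : IsSelfAdjoint (cfc Real.log Y) := cfc_predicate _ _
    have h2 : IsSelfAdjoint (cfc Real.log X) := cfc_predicate _ _
    exact Matrix.IsHermitian.sub h1 h2
  · intro v
    rw [Matrix.sub_mulVec, dotProduct_sub, quadform_cfc hX.1 Real.log v,
      quadform_cfc hY.1 Real.log v, ← Complex.ofReal_sub, Complex.zero_le_real, sub_nonneg]
    refine sum_log_mono _ _ _ _ (fun i => hX.eigenvalues_pos i) (fun i => hY.eigenvalues_pos i)
      ?_ ?_ ?_
    · have h1 := weight_sum hX.1 v
      have h2 := weight_sum hY.1 v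
      have := h1.trans h2.symm
      exact_mod_cast this
    · intro c hc
      exact qf_mono hY.1 hX.1 (fun s => (s + c)⁻¹) (resolvent_antitone hX hY h c hc) v
    · refine qf_mono hX.1 hY.1 (fun s => s - 1) ?_ v
      rw [cfc_sub_one hX.1, cfc_sub_one hY.1]
      simpa using h

end Aux

theorem stmt_15 {n : Type*} [Fintype n] [DecidableEq n]
    (A B C : Matrix n n ℂ) (hA : A.PosDef) (hB : B.PosDef) (hC : C.PosDef)
    (hBC : (C - B).PosSemidef) :
    ((mpow A (1/2) * mlog (mpow A (-(1/2)) * C * mpow A (-(1/2))) * mpow A (1/2)) -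
      (mpow A (1/2) * mlog (mpow A (-(1/2)) * B * mpow A (-(1/2))) * mpow A (1/2))).PosSemidef := by
  have hAp : (mpow A (1/2)).PosDef := by
    rw [mpow]
    exact cfc_posDef hA fun i => Real.rpow_pos_of_pos (hA.eigenvalues_pos i) _
  have hAm : (mpow A (-(1/2))).PosDef := by
    rw [mpow]
    exact cfc_posDef hA fun i => Real.rpow_pos_of_pos (hA.eigenvalues_pos i) _
  set P := mpow A (1/2)
  set Q := mpow A (-(1/2))
  have hPH : P.IsHermitian := hAp.1
  have hQH : Q.IsHermitian := hAm.1
  have hdetQ : IsUnit Q.det := (Matrix.isUnit_iff_isUnit_det _).mp hAm.isUnit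
  have hXpd : (Q * B * Q).PosDef := by
    have := posDef_conj hB Q hdetQ
    rwa [hQH.eq] at this
  have hYpd : (Q * C * Q).PosDef := by
    have := posDef_conj hC Q hdetQ
    rwa [hQH.eq] at this
  have hYX : (Q * C * Q - (Q * B * Q)).PosSemidef := by
    have key : Q * C * Q - Q * B * Q = Q * (C - B) * Qᴴ := by
      rw [hQH.eq, Matrix.mul_sub, Matrix.sub_mul]
    rw [key]
    exact hBC.mul_mul_conjTranspose_same Q
  have hlog := log_monotone hXpd hYpd hYX
  have key : P * mlog (Q * C * Q) * P - P * mlog (Q * B * Q) * P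
      = P * (cfc Real.log (Q * C * Q) - cfc Real.log (Q * B * Q)) * Pᴴ := by
    rw [hPH.eq, Matrix.mul_sub, Matrix.sub_mul, mlog, mlog]
  rw [key]
  exact hlog.mul_mul_conjTranspose_same P
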